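/- Let (a_k)_{k≥0} be nondecreasing with limit a, let 0 < δ < 1, and suppose there exists K such that for all k > K, a_k − a_{k-1} ≤ c(a − a_k), where c > 0 satisfies (c+1)^{−2} 2^{δ+1} > 1 and a > a_K. Then Σ_{k=1}^∞ (a − a_k)² 2^{k(δ+1)} = +∞. -/
import Mathlib


/-- The "all large indices are bad" case: if `a_k - a_{k-1} ≤ c (A - a_k)` for all
`k > K` and `a_K < A`, then `Σ (A - a_k)² 2^{k(δ+1)} = ∞`. -/
theorem stmt5 (δ c : ℝ) (hδ0 : 0 < δ) (hδ1 : δ < 1) (hc : 0 < c)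
    (hcδ : 1 < (c+1)⁻¹^2 * (2:ℝ)^(δ+1))
    (a : ℕ → ℝ) (A : ℝ) (hmono : Monotone a)
    (hlim : Filter.Tendsto a Filter.atTop (nhds A))
    (K : ℕ) (hbad : ∀ k : ℕ, K < k → a k - a (k-1) ≤ c * (A - a k))
    (hK : a K < A) :
    ∑' k : ℕ, ENNReal.ofReal ((A - a k)^2 * (2:ℝ)^((k:ℝ)*(δ+1))) = ⊤ := by
  by_contra h
  have htend := ENNReal.tendsto_atTop_zero_of_tsum_ne_top h
  set C := (A - a K)^2 * (2:ℝ)^((K:ℝ)*(δ+1)) with hC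
  have hAK : 0 < A - a K := by linarith
  have hc1 : (0:ℝ) < c + 1 := by linarith
  have hinv : (0:ℝ) < (c+1)⁻¹ := inv_pos.mpr hc1
  have key : ∀ n : ℕ, ((c+1)⁻¹)^n * (A - a K) ≤ A - a (K+n) := by
    intro n
    induction n with
    | zero => simp
    | succ n ih =>
      have hk : K < K + n + 1 := by omega
      have h1 : A - a (K+n) ≤ (c+1) * (A - a (K+n+1)) := by
        have hb := hbad (K+n+1) hk
        have h2 : (K+n+1) - 1 = K + n := by omega
        rw [h2] at hb
        linarith
      have h3 : (c+1)⁻¹ * (A - a (K+n)) ≤ A - a (K+n+1) := by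
        rw [inv_mul_le_iff₀ hc1]; exact h1
      have : K + (n+1) = K + n + 1 := by omega
      rw [this]
      calc ((c+1)⁻¹)^(n+1) * (A - a K)
          = (c+1)⁻¹ * (((c+1)⁻¹)^n * (A - a K)) := by ring
        _ ≤ (c+1)⁻¹ * (A - a (K+n)) := mul_le_mul_of_nonneg_left ih hinv.le
        _ ≤ A - a (K+n+1) := h3
  have hlb : ∀ k, K ≤ k → C ≤ (A - a k)^2 * (2:ℝ)^((k:ℝ)*(δ+1)) := by
    intro k hk
    obtain ⟨n, rfl⟩ := Nat.exists_eq_add_of_le hk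
    have hposn : 0 < ((c+1)⁻¹)^n * (A - a K) := mul_pos (pow_pos hinv n) hAK
    have hsq : (((c+1)⁻¹)^n * (A - a K))^2 ≤ (A - a (K+n))^2 :=
      pow_le_pow_left₀ hposn.le (key n) 2
    have h2 : (2:ℝ)^(((K+n:ℕ):ℝ)*(δ+1)) = (2:ℝ)^((K:ℝ)*(δ+1)) * ((2:ℝ)^(δ+1))^n := by
      push_cast
      rw [← Real.rpow_natCast ((2:ℝ)^(δ+1)) n, ← Real.rpow_mul (by norm_num),
        ← Real.rpow_add (by norm_num)]
      ring_nf
    have hzpos : (0:ℝ) < (2:ℝ)^((K:ℝ)*(δ+1)) := Real.rpow_pos_of_pos (by norm_num) _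
    have hwpos : (0:ℝ) < (2:ℝ)^(δ+1) := Real.rpow_pos_of_pos (by norm_num) _
    have hCpos : 0 < C := mul_pos (pow_pos hAK 2) hzpos
    have hr : (1:ℝ) ≤ ((c+1)⁻¹^2 * (2:ℝ)^(δ+1))^n := one_le_pow₀ hcδ.le
    calc C ≤ C * ((c+1)⁻¹^2 * (2:ℝ)^(δ+1))^n := le_mul_of_one_le_right hCpos.le hr
      _ = (((c+1)⁻¹)^n * (A - a K))^2 * ((2:ℝ)^((K:ℝ)*(δ+1)) * ((2:ℝ)^(δ+1))^n) := by
          rw [hC]; ring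
      _ ≤ (A - a (K+n))^2 * ((2:ℝ)^((K:ℝ)*(δ+1)) * ((2:ℝ)^(δ+1))^n) := by
          apply mul_le_mul_of_nonneg_right hsq
          positivity
      _ = (A - a (K+n))^2 * (2:ℝ)^(((K+n:ℕ):ℝ)*(δ+1)) := by rw [h2]
  have hCpos : 0 < C := mul_pos (pow_pos hAK 2) (Real.rpow_pos_of_pos (by norm_num) _)
  have hev : ∀ᶠ k in Filter.atTop,
      ENNReal.ofReal ((A - a k)^2 * (2:ℝ)^((k:ℝ)*(δ+1))) < ENNReal.ofReal C :=
    htend.eventually_lt_const (ENNReal.ofReal_pos.mpr hCpos)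
  obtain ⟨k, hk1, hk2⟩ := (hev.and (Filter.eventually_ge_atTop K)).exists
  exact absurd (ENNReal.ofReal_le_ofReal (hlb k hk2)) hk1.not_ge
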